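/- Let v ∈ ℝ^n, let X = {mv + w : m ∈ ℕ, w ∈ ℤ^n}, and let π : ℝ^n → ℝ^n/ℤ^n be the quotient map onto the torus. Then the closure of π(X) in ℝ^n/ℤ^n is a closed subgroup of ℝ^n/ℤ^n with finitely many connected components; consequently, the closure of X in ℝ^n is symmetric with respect to the origin, i.e. if x lies in the closure of X then so does −x. -/

import Mathlib

open Metric Filter Set

namespace ClosureOrbitAux

instance : Fact ((0:ℝ) < 1) := ⟨one_pos⟩

variable {n : ℕ}

/-- The projection map onto the torus. -/
noncomputable abbrev pmap : (Fin n → ℝ) → (Fin n → AddCircle (1 : ℝ)) :=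
  fun x i => ((x i : ℝ) : AddCircle (1 : ℝ))

/-- The basepoint on the torus. -/
noncomputable abbrev pp (v : Fin n → ℝ) : Fin n → AddCircle (1 : ℝ) :=
  fun i => ((v i : ℝ) : AddCircle (1 : ℝ))

theorem pmap_continuous : Continuous (pmap (n := n)) :=
  continuous_pi fun i => continuous_quotient_mk'.comp (continuous_apply i)

theorem pmap_int_zero (w : Fin n → ℤ) : pmap (fun i => ((w i : ℝ))) = 0 := by
  funext i
  exact (AddCircle.coe_eq_zero_iff (1:ℝ)).2 ⟨w i, by simp⟩

theorem pmap_add (x y : Fin n → ℝ) : pmap (x + y) = pmap x + pmap y := by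
  funext i
  show (((x + y) i : ℝ) : AddCircle (1:ℝ)) = _
  simp only [Pi.add_apply]
  exact AddCircle.coe_add (p := (1:ℝ)) _ _

theorem pmap_add_int (x : Fin n → ℝ) (w : Fin n → ℤ) :
    pmap (x + fun i => ((w i : ℝ))) = pmap x := by
  rw [pmap_add, pmap_int_zero, add_zero]

theorem pmap_orbit (v : Fin n → ℝ) (m : ℕ) (w : Fin n → ℤ) :
    pmap ((m : ℝ) • v + fun i => ((w i : ℝ))) = m • pp v := by
  rw [pmap_add, pmap_int_zero, add_zero]
  funext i
  show ((((m:ℝ) • v) i : ℝ) : AddCircle (1:ℝ)) = m • pp v i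
  simp only [Pi.smul_apply, smul_eq_mul]
  rw [← nsmul_eq_mul, AddCircle.coe_nsmul]

/-- recurrence: multiples of `p` come back near `0` with arbitrarily large index. -/
theorem rec_lemma (p : Fin n → AddCircle (1:ℝ)) {ε : ℝ} (hε : 0 < ε) (N : ℕ) :
    ∃ l : ℕ, N ≤ l ∧ ‖l • p‖ < ε := by
  obtain ⟨q, -, φ, hφ, hlim⟩ :=
    isCompact_univ.tendsto_subseq (x := fun k : ℕ => k • p) (fun k => Set.mem_univ _)
  rw [Metric.tendsto_atTop] at hlim
  obtain ⟨K, hK⟩ := hlim (ε/2) (by linarith)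
  set k := K + φ K + N with hk
  have h1 : K ≤ k := by omega
  have h2 : φ K + N ≤ φ k := le_trans (by omega) hφ.le_apply
  refine ⟨φ k - φ K, by omega, ?_⟩
  have hsub : (φ k - φ K) • p = φ k • p - φ K • p := by
    rw [sub_nsmul p (by omega : φ K ≤ φ k)]; abel
  have d1 := hK k h1
  have d2 := hK K le_rfl
  have : ‖φ k • p - φ K • p‖ = dist (φ k • p) (φ K • p) := (dist_eq_norm _ _).symm
  calc ‖(φ k - φ K) • p‖ = dist (φ k • p) (φ K • p) := by rw [hsub, this]
    _ ≤ dist (φ k • p) q + dist (φ K • p) q := dist_triangle_right _ _ _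
    _ < ε := by simp only [Function.comp] at d1 d2; linarith

theorem line_of_nondiscrete (H : AddSubgroup (Fin n → ℝ))
    (hH : IsClosed (H : Set (Fin n → ℝ)))
    (hnd : ∀ ε : ℝ, 0 < ε → ∃ d : Fin n → ℝ, d ∈ H ∧ d ≠ 0 ∧ ‖d‖ < ε) :
    ∃ u : Fin n → ℝ, ‖u‖ = 1 ∧ ∀ t : ℝ, t • u ∈ H := by
  have hch : ∀ k : ℕ, ∃ d : Fin n → ℝ, d ∈ H ∧ d ≠ 0 ∧ ‖d‖ < 1/(k+1) := by
    intro k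
    exact hnd _ (by positivity)
  choose d hdH hd0 hdlt using hch
  have hnorm : ∀ k, 0 < ‖d k‖ := fun k => norm_pos_iff.2 (hd0 k)
  set u : ℕ → (Fin n → ℝ) := fun k => ‖d k‖⁻¹ • d k with hu
  have husph : ∀ k, u k ∈ sphere (0 : Fin n → ℝ) 1 := by
    intro k
    simp [hu, norm_smul, abs_of_pos (inv_pos.2 (hnorm k)),
      inv_mul_cancel₀ (hnorm k).ne']
  obtain ⟨q, hq, φ, hφ, hlim⟩ := (isCompact_sphere (0 : Fin n → ℝ) 1).tendsto_subseq husph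
  refine ⟨q, by simpa using hq, fun t => ?_⟩
  have hd0' : Tendsto (fun k => ‖d (φ k)‖) atTop (nhds 0) := by
    apply squeeze_zero (fun k => (hnorm (φ k)).le) (fun k => ?_)
      tendsto_one_div_add_atTop_nhds_zero_nat
    calc ‖d (φ k)‖ ≤ 1/((φ k : ℝ)+1) := (hdlt (φ k)).le
      _ ≤ 1/((k:ℝ)+1) := by
          apply one_div_le_one_div_of_le (by positivity)
          have h : k ≤ φ k := hφ.le_apply
          have : (k:ℝ) ≤ (φ k : ℝ) := by exact_mod_cast h
          linarith
  have key : Tendsto (fun k => (⌊t / ‖d (φ k)‖⌋ : ℝ) * ‖d (φ k)‖) atTop (nhds t) := by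
    rw [tendsto_iff_dist_tendsto_zero]
    apply squeeze_zero (fun k => dist_nonneg) (fun k => ?_) hd0'
    have hr := hnorm (φ k)
    have h1 : (⌊t / ‖d (φ k)‖⌋ : ℝ) ≤ t / ‖d (φ k)‖ := Int.floor_le _
    have h2 : t / ‖d (φ k)‖ - 1 ≤ (⌊t / ‖d (φ k)‖⌋ : ℝ) := by
      have := Int.lt_floor_add_one (t / ‖d (φ k)‖); linarith
    rw [Real.dist_eq, abs_le]
    constructor
    · nlinarith [div_mul_cancel₀ t hr.ne']
    · nlinarith [div_mul_cancel₀ t hr.ne']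
  have hmem : ∀ k, (⌊t / ‖d (φ k)‖⌋ : ℤ) • d (φ k) ∈ H := fun k =>
    zsmul_mem (hdH (φ k)) _
  have heq : ∀ k, (⌊t / ‖d (φ k)‖⌋ : ℤ) • d (φ k)
      = ((⌊t / ‖d (φ k)‖⌋ : ℝ) * ‖d (φ k)‖) • u (φ k) := by
    intro k
    rw [hu]
    rw [← Int.cast_smul_eq_zsmul ℝ, smul_smul, mul_assoc,
      mul_inv_cancel₀ (hnorm (φ k)).ne', mul_one]
  have hlim2 : Tendsto (fun k => (⌊t / ‖d (φ k)‖⌋ : ℤ) • d (φ k)) atTop (nhds (t • q)) := by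
    simp_rw [heq]
    exact key.smul hlim
  exact hH.mem_of_tendsto hlim2 (Eventually.of_forall hmem)

section WithX

variable (v : Fin n → ℝ) (X : Set (Fin n → ℝ))
variable (hX : X = {x | ∃ (m : ℕ) (w : Fin n → ℤ), x = (m : ℝ) • v + fun i => ((w i : ℝ))})

include hX

theorem image_eq : pmap '' X = Set.range (fun m : ℕ => m • pp v) := by
  subst hX
  ext g
  constructor
  · rintro ⟨x, ⟨m, w, rfl⟩, rfl⟩
    exact ⟨m, (pmap_orbit v m w).symm⟩
  · rintro ⟨m, rfl⟩
    exact ⟨_, ⟨m, 0, rfl⟩, pmap_orbit v m 0⟩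

theorem closure_image_eq :
    closure (pmap '' X) = ((AddSubgroup.zmultiples (pp v)).topologicalClosure :
      Set (Fin n → AddCircle (1:ℝ))) := by
  have hzset : ((AddSubgroup.zmultiples (pp v)) : Set (Fin n → AddCircle (1:ℝ)))
      = Set.range (fun m : ℤ => m • pp v) := by
    ext x
    simp [AddSubgroup.mem_zmultiples_iff, eq_comm]
  rw [AddSubgroup.topologicalClosure_coe, hzset, image_eq v X hX]
  apply Set.Subset.antisymm
  · apply closure_mono
    rintro x ⟨m, rfl⟩
    exact ⟨(m : ℤ), by simp⟩
  · apply closure_minimal _ isClosed_closure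
    rintro x ⟨m, rfl⟩
    rcases le_or_gt 0 m with hm | hm
    · obtain ⟨k, rfl⟩ := Int.eq_ofNat_of_zero_le hm
      exact subset_closure ⟨k, by simp⟩
    · obtain ⟨k, rfl⟩ : ∃ k : ℕ, m = -(k:ℤ) :=
        ⟨(-m).toNat, by omega⟩
      rw [Metric.mem_closure_iff]
      intro ε hε
      obtain ⟨l, hkl, hl⟩ := rec_lemma (pp v) hε k
      refine ⟨(l - k) • pp v, ⟨l - k, rfl⟩, ?_⟩
      have hsub : (l - k) • pp v = l • pp v - k • pp v := by
        rw [sub_nsmul (pp v) hkl]; abel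
      have : (-(k:ℤ)) • pp v - (l - k) • pp v = -(l • pp v) := by
        rw [hsub, neg_zsmul, natCast_zsmul]; abel
      rw [dist_eq_norm, this, norm_neg]
      exact hl

theorem sym_closure : ∀ x ∈ closure X, -x ∈ closure X := by
  intro x hx
  rw [Metric.mem_closure_iff] at hx ⊢
  intro ε hε
  obtain ⟨y, hy, hxy⟩ := hx (ε/2) (by linarith)
  rw [hX] at hy
  obtain ⟨m₀, w₀, rfl⟩ := hy
  obtain ⟨l, hml, hl⟩ := rec_lemma (pp v) (show (0:ℝ) < ε/2 by linarith) m₀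
  set z : Fin n → ℤ := fun i => -round ((l:ℝ) * v i) with hz
  have hcoord : ∀ i, |(l:ℝ) * v i + (z i : ℝ)| < ε/2 := by
    intro i
    have h1 : ‖(l • pp v) i‖ ≤ ‖l • pp v‖ := norm_le_pi_norm _ i
    have h2 : (l • pp v) i = (((l:ℝ) * v i : ℝ) : AddCircle (1:ℝ)) := by
      simp only [Pi.smul_apply, pp]
      rw [← AddCircle.coe_nsmul, nsmul_eq_mul]
    rw [h2] at h1
    rw [AddCircle.norm_eq] at h1
    simp only [hz, Int.cast_neg]
    rw [inv_one, one_mul, mul_one] at h1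
    calc |(l:ℝ) * v i + -(round ((l:ℝ) * v i) : ℝ)|
        = |(l:ℝ) * v i - round ((l:ℝ) * v i)| := by ring_nf
      _ ≤ ‖l • pp v‖ := h1
      _ < ε/2 := hl
  set y' : Fin n → ℝ := ((l - m₀ : ℕ) : ℝ) • v + fun i => ((z i - w₀ i : ℤ) : ℝ) with hy'
  have hy'X : y' ∈ X := by rw [hX]; exact ⟨l - m₀, z - w₀, by simp [hy']⟩
  refine ⟨y', hy'X, ?_⟩
  have hsum : y' + ((m₀ : ℝ) • v + fun i => ((w₀ i : ℝ))) = (l : ℝ) • v + fun i => ((z i : ℝ)) := by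
    rw [hy']
    have hc : ((l - m₀ : ℕ) : ℝ) = (l : ℝ) - (m₀ : ℝ) := by
      rw [Nat.cast_sub hml]
    rw [hc]
    funext i
    simp only [Pi.add_apply, Pi.smul_apply, smul_eq_mul]
    push_cast
    ring
  have hnorm : ‖(l : ℝ) • v + (fun i => ((z i : ℝ)))‖ < ε/2 := by
    rw [pi_norm_lt_iff (by linarith : (0:ℝ) < ε/2)]
    intro i
    simpa using hcoord i
  calc dist (-x) y' ≤ dist (-x) (-((m₀ : ℝ) • v + fun i => ((w₀ i : ℝ))))
        + dist (-((m₀ : ℝ) • v + fun i => ((w₀ i : ℝ)))) y' := dist_triangle _ _ _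
    _ < ε := by
        have e1 : dist (-x) (-((m₀ : ℝ) • v + fun i => ((w₀ i : ℝ))))
            = dist x ((m₀ : ℝ) • v + fun i => ((w₀ i : ℝ))) := dist_neg_neg _ _
        have e2 : dist (-((m₀ : ℝ) • v + fun i => ((w₀ i : ℝ)))) y'
            = ‖(l : ℝ) • v + (fun i => ((z i : ℝ)))‖ := by
          rw [dist_comm, dist_eq_norm, sub_neg_eq_add, hsum]
        rw [e1, e2]
        linarith

theorem closureX_int_invariant : ∀ x ∈ closure X, ∀ w : Fin n → ℤ,
    x + (fun i => ((w i : ℝ))) ∈ closure X := by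
  intro x hx w
  set c : Fin n → ℝ := fun i => ((w i : ℝ)) with hc
  have hsub : (fun y => y + c) '' X ⊆ X := by
    rintro _ ⟨y, hy, rfl⟩
    rw [hX] at hy ⊢
    obtain ⟨m, w', rfl⟩ := hy
    refine ⟨m, w' + w, ?_⟩
    show ((m : ℝ) • v + fun i => ((w' i : ℝ))) + c = _
    rw [add_assoc]
    congr 1
    funext i
    simp [hc]
  have h1 : x + c ∈ (fun y => y + c) '' closure X := ⟨x, hx, rfl⟩
  have h2 : (fun y => y + c) '' closure X ⊆ closure ((fun y => y + c) '' X) :=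
    image_closure_subset_closure_image (continuous_add_right c)
  exact closure_mono hsub (h2 h1)

theorem image_closure_eq : pmap '' closure X = closure (pmap '' X) := by
  refine Set.Subset.antisymm (image_closure_subset_closure_image pmap_continuous) ?_
  have hK : pmap '' closure X = pmap '' (closure X ∩ closedBall 0 1) := by
    apply Set.Subset.antisymm
    · rintro _ ⟨x, hx, rfl⟩
      set w : Fin n → ℤ := fun i => -⌊x i⌋ with hw
      have hx' : x + (fun i => ((w i : ℝ))) ∈ closure X :=
        closureX_int_invariant v X hX x hx w
      have hball : x + (fun i => ((w i : ℝ))) ∈ closedBall (0 : Fin n → ℝ) 1 := by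
        rw [mem_closedBall_zero_iff]
        rw [pi_norm_le_iff_of_nonneg (by norm_num : (0:ℝ) ≤ 1)]
        intro i
        simp only [Pi.add_apply, hw, Int.cast_neg, Real.norm_eq_abs]
        have h1 := Int.floor_le (x i)
        have h2 := Int.lt_floor_add_one (x i)
        rw [abs_le]
        constructor <;> push_cast <;> linarith
      exact ⟨_, ⟨hx', hball⟩, by rw [pmap_add_int]⟩
    · exact Set.image_mono Set.inter_subset_left
  rw [hK]
  have hcomp : IsCompact (pmap '' (closure X ∩ closedBall 0 1)) :=
    ((isCompact_closedBall (0 : Fin n → ℝ) 1).inter_left isClosed_closure).image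
      pmap_continuous
  apply closure_minimal _ hcomp.isClosed
  rw [← hK]
  exact Set.image_mono subset_closure

theorem finite_components :
    Finite (ConnectedComponents ↥(closure (pmap '' X))) := by
  classical
  -- X is closed under addition and contains 0
  have hX0 : (0 : Fin n → ℝ) ∈ X := by
    rw [hX]; exact ⟨0, 0, by funext i; norm_num⟩
  have hXadd : ∀ a ∈ X, ∀ b ∈ X, a + b ∈ X := by
    intro a ha b hb
    rw [hX] at ha hb ⊢
    obtain ⟨m, w, rfl⟩ := ha
    obtain ⟨m', w', rfl⟩ := hb
    refine ⟨m + m', w + w', ?_⟩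
    funext i
    simp only [Pi.add_apply, Pi.smul_apply, smul_eq_mul]
    push_cast
    ring
  have hsym := sym_closure v X hX
  -- the closure of X is an additive subgroup of ℝⁿ
  let XM : AddSubmonoid (Fin n → ℝ) :=
    { carrier := X
      add_mem' := fun ha hb => hXadd _ ha _ hb
      zero_mem' := hX0 }
  let Hgrp : AddSubgroup (Fin n → ℝ) :=
    { carrier := closure X
      add_mem' := fun {a b} ha hb => XM.topologicalClosure.add_mem ha hb
      zero_mem' := subset_closure hX0
      neg_mem' := fun {a} ha => hsym a ha }
  have hHmem : ∀ {a : Fin n → ℝ}, a ∈ Hgrp ↔ a ∈ closure X := fun {a} => Iff.rfl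
  -- the subspace of directions contained in the closure of X
  let V : Submodule ℝ (Fin n → ℝ) :=
    { carrier := {u | ∀ t : ℝ, t • u ∈ closure X}
      add_mem' := fun {a b} ha hb t => by
        rw [smul_add]; exact Hgrp.add_mem (ha t) (hb t)
      zero_mem' := fun t => by rw [smul_zero]; exact subset_closure hX0
      smul_mem' := fun c u hu t => by rw [smul_smul]; exact hu (t * c) }
  have hVsub : (V : Set (Fin n → ℝ)) ⊆ closure X := fun u hu => by
    have := hu 1; rwa [one_smul] at this
  obtain ⟨W, hW⟩ := Submodule.exists_isCompl V
  let PV := V.linearProjOfIsCompl W hW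
  let PW := W.linearProjOfIsCompl V hW.symm
  have hdecomp : ∀ x : Fin n → ℝ, ((PV x : Fin n → ℝ)) + ((PW x : Fin n → ℝ)) = x :=
    fun x => Submodule.projection_add_projection_eq_self hW x
  let PWE : (Fin n → ℝ) →ₗ[ℝ] (Fin n → ℝ) := W.subtype.comp PW
  let PWC := LinearMap.toContinuousLinearMap PWE
  set M := ‖PWC‖ with hM
  have hMnn : 0 ≤ M := norm_nonneg _
  have hbound : ∀ x : Fin n → ℝ, ‖PWE x‖ ≤ M * ‖x‖ := fun x => PWC.le_opNorm x
  -- D = (closure X) ∩ W is discrete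
  have hdisc : ∃ εD : ℝ, 0 < εD ∧
      ∀ d : Fin n → ℝ, d ∈ closure X → d ∈ W → ‖d‖ < εD → d = 0 := by
    by_contra hc
    push_neg at hc
    have hnd : ∀ ε : ℝ, 0 < ε → ∃ d : Fin n → ℝ,
        d ∈ Hgrp ⊓ W.toAddSubgroup ∧ d ≠ 0 ∧ ‖d‖ < ε := by
      intro ε hε
      obtain ⟨d, hd1, hd2, hd3, hd4⟩ := hc ε hε
      exact ⟨d, AddSubgroup.mem_inf.2 ⟨hd1, hd2⟩, hd4, hd3⟩
    have hcl : IsClosed ((Hgrp ⊓ W.toAddSubgroup : AddSubgroup (Fin n → ℝ)) :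
        Set (Fin n → ℝ)) := by
      rw [AddSubgroup.coe_inf]
      exact isClosed_closure.inter W.closed_of_finiteDimensional
    obtain ⟨u, hu1, hu2⟩ := line_of_nondiscrete _ hcl hnd
    have huV : u ∈ V := fun t => (AddSubgroup.mem_inf.1 (hu2 t)).1
    have huW : u ∈ W := by
      have := (AddSubgroup.mem_inf.1 (hu2 1)).2
      rwa [one_smul] at this
    have : u = 0 := (Submodule.disjoint_def.1 hW.disjoint) u huV huW
    rw [this, norm_zero] at hu1
    exact one_ne_zero hu1.symm
  obtain ⟨εD, hεD0, hεD⟩ := hdisc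
  set ε := εD / (M + 1) with hε
  have hεpos : 0 < ε := by positivity
  have himgcl := image_closure_eq v X hX
  -- key smallness claim: small elements of the closure group lie in C₀
  have hsmall : ∀ g ∈ closure (pmap '' X), ‖g‖ < ε →
      g ∈ closure (pmap '' (V : Set (Fin n → ℝ))) := by
    intro g hg hgn
    rw [← himgcl] at hg
    obtain ⟨h, hh, rfl⟩ := hg
    set z : Fin n → ℤ := fun i => -round (h i) with hz
    set h' : Fin n → ℝ := h + fun i => ((z i : ℝ)) with hh'
    have hh'cl : h' ∈ closure X := closureX_int_invariant v X hX h hh z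
    have hh'n : ‖h'‖ < ε := by
      rw [pi_norm_lt_iff hεpos]
      intro i
      have h1 : ‖pmap h i‖ ≤ ‖pmap h‖ := norm_le_pi_norm _ i
      have h2 : ‖pmap h i‖ = |h i - round (h i)| := by
        show ‖((h i : ℝ) : AddCircle (1:ℝ))‖ = _
        rw [AddCircle.norm_eq, inv_one, one_mul, mul_one]
      simp only [hh', Pi.add_apply, hz, Int.cast_neg, Real.norm_eq_abs]
      calc |h i + -(round (h i) : ℝ)| = |h i - round (h i)| := by ring_nf
        _ ≤ ‖pmap h‖ := h2 ▸ h1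
        _ < ε := hgn
    have hdW : (PW h' : Fin n → ℝ) ∈ W := (PW h').2
    have hdcl : (PW h' : Fin n → ℝ) ∈ closure X := by
      have : (PW h' : Fin n → ℝ) = h' - (PV h' : Fin n → ℝ) :=
        eq_sub_of_add_eq' (hdecomp h')
      rw [this]
      exact Hgrp.sub_mem hh'cl (hVsub (PV h').2)
    have hdn : ‖(PW h' : Fin n → ℝ)‖ < εD := by
      have h1 : ‖PWE h'‖ ≤ M * ‖h'‖ := hbound h'
      have h2 : PWE h' = (PW h' : Fin n → ℝ) := rfl
      rw [h2] at h1
      have : M * ‖h'‖ ≤ M * ε := mul_le_mul_of_nonneg_left hh'n.le hMnn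
      have hlt : M * ε < εD := by
        rw [hε]
        rw [div_eq_iff (by positivity : (M:ℝ) + 1 ≠ 0)] at *
        nlinarith
      linarith
    have hd0 : (PW h' : Fin n → ℝ) = 0 := hεD _ hdcl hdW hdn
    have hh'V : h' ∈ V := by
      have := hdecomp h'
      rw [hd0, add_zero] at this
      rw [← this]
      exact (PV h').2
    have : pmap h = pmap h' := (pmap_add_int h z).symm
    rw [this]
    exact subset_closure ⟨h', hh'V, rfl⟩
  -- the connected subgroup C₀
  set C₀ := closure (pmap '' (V : Set (Fin n → ℝ))) with hC₀
  have hC₀G : C₀ ⊆ closure (pmap '' X) := by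
    rw [hC₀]
    apply closure_minimal _ isClosed_closure
    calc pmap '' (V : Set (Fin n → ℝ)) ⊆ pmap '' closure X := Set.image_mono hVsub
      _ = closure (pmap '' X) := himgcl
  have hC₀conn : IsPreconnected C₀ := by
    rw [hC₀]
    exact ((V.convex.isPreconnected).image _ pmap_continuous.continuousOn).closure
  have h0C₀ : (0 : Fin n → AddCircle (1:ℝ)) ∈ C₀ := by
    rw [hC₀]
    refine subset_closure ⟨0, V.zero_mem, ?_⟩
    funext i
    show ((0:ℝ) : AddCircle (1:ℝ)) = 0
    norm_num
  -- the closure of the image is a subgroup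
  set Gsub := (AddSubgroup.zmultiples (pp v)).topologicalClosure with hGsub
  have hGcoe : (Gsub : Set (Fin n → AddCircle (1:ℝ))) = closure (pmap '' X) :=
    (closure_image_eq v X hX).symm
  have hGmem : ∀ {g}, g ∈ closure (pmap '' X) ↔ g ∈ Gsub := by
    intro g
    rw [← hGcoe]
    rfl
  -- a finite cover by balls
  have hGcomp : IsCompact (closure (pmap '' X)) := isClosed_closure.isCompact
  obtain ⟨t, htG, hcover⟩ := hGcomp.elim_nhds_subcover (fun g => Metric.ball g (ε/2))
    (fun g _ => Metric.ball_mem_nhds g (by positivity))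
  have hcoset : ∀ g ∈ closure (pmap '' X), ∃ f ∈ t, g - f ∈ C₀ := by
    intro g hg
    obtain ⟨f, hf, hgf⟩ := Set.mem_iUnion₂.1 (hcover hg)
    refine ⟨f, hf, hsmall _ ?_ ?_⟩
    · exact hGmem.2 (Gsub.sub_mem (hGmem.1 hg) (hGmem.1 (htG f hf)))
    · rw [← dist_eq_norm]
      calc dist g f < ε/2 := mem_ball.1 hgf
        _ < ε := by linarith
  -- conclude finiteness of connected components
  have hsurj : Function.Surjective
      (fun f : {f // f ∈ t} => (ConnectedComponents.mk
        (⟨f.1, htG f.1 f.2⟩ : ↥(closure (pmap '' X))))) := by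
    intro c
    obtain ⟨x, rfl⟩ := ConnectedComponents.surjective_coe c
    obtain ⟨f, hf, hxf⟩ := hcoset x.1 x.2
    refine ⟨⟨f, hf⟩, ?_⟩
    have hB : ((fun c => c + f) '' C₀) ⊆ closure (pmap '' X) := by
      rintro _ ⟨c₁, hc₁, rfl⟩
      exact hGmem.2 (Gsub.add_mem (hGmem.1 (hC₀G hc₁)) (hGmem.1 (htG f hf)))
    set A : Set ↥(closure (pmap '' X)) := Subtype.val ⁻¹' ((fun c => c + f) '' C₀) with hA
    have hAconn : IsPreconnected A := by
      rw [← Topology.IsInducing.subtypeVal.isPreconnected_image]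
      have himg : Subtype.val '' A = (fun c => c + f) '' C₀ := by
        rw [hA, Subtype.image_preimage_coe]
        exact Set.inter_eq_right.2 hB
      rw [himg]
      exact hC₀conn.image _ (continuous_add_right f).continuousOn
    have hfA : (⟨f, htG f hf⟩ : ↥(closure (pmap '' X))) ∈ A := by
      rw [hA]
      exact ⟨0, h0C₀, zero_add f⟩
    have hxA : x ∈ A := by
      rw [hA]
      exact ⟨x.1 - f, hxf, sub_add_cancel x.1 f⟩
    have hsub := hAconn.subset_connectedComponent hxA
    show ConnectedComponents.mk _ = ConnectedComponents.mk x
    rw [ConnectedComponents.coe_eq_coe']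
    exact hsub hfA
  exact Finite.of_surjective _ hsurj

end WithX

end ClosureOrbitAux

/-- **Structure of the closure of an orbit on the torus.** Let `v ∈ ℝⁿ`, let
`X = {m • v + w : m ∈ ℕ, w ∈ ℤⁿ}`, and let `π : ℝⁿ → ℝⁿ/ℤⁿ` be the quotient map onto the
torus. Then the closure of `π(X)` is a closed subgroup of the torus with finitely many
connected components; consequently, the closure of `X` in `ℝⁿ` is symmetric with respect
to the origin. -/
theorem closure_orbit_subgroup_finite_components
    (n : ℕ) (v : Fin n → ℝ)
    (X : Set (Fin n → ℝ))
    (hX : X = {x | ∃ (m : ℕ) (w : Fin n → ℤ), x = (m : ℝ) • v + fun i => ((w i : ℝ))})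
    (π : (Fin n → ℝ) → (Fin n → AddCircle (1 : ℝ)))
    (hπ : π = fun x i => ((x i : ℝ) : AddCircle (1 : ℝ))) :
    (∃ G : AddSubgroup (Fin n → AddCircle (1 : ℝ)),
      IsClosed (G : Set (Fin n → AddCircle (1 : ℝ))) ∧
      (G : Set (Fin n → AddCircle (1 : ℝ))) = closure (π '' X)) ∧
    Finite (ConnectedComponents (closure (π '' X))) ∧
    (∀ x ∈ closure X, -x ∈ closure X) := by
  subst hπ
  refine ⟨⟨(AddSubgroup.zmultiples (ClosureOrbitAux.pp v)).topologicalClosure,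
      AddSubgroup.isClosed_topologicalClosure _,
      (ClosureOrbitAux.closure_image_eq v X hX).symm⟩,
    ClosureOrbitAux.finite_components v X hX,
    ClosureOrbitAux.sym_closure v X hX⟩
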